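/- Let F(x) = αx + β with α < 0, β < 0, and α > β, on C = [-1, 1]. Then F is strongly pseudomonotone on C with constant γ = (α-β)/2. -/
import Mathlib


theorem stmt_4 (α β : ℝ) (hα : α < 0) (hβ : β < 0) (hab : α > β) :
    ∀ x ∈ Set.Icc (-1:ℝ) 1, ∀ y ∈ Set.Icc (-1:ℝ) 1,
      (α * x + β) * (y - x) ≥ 0 →
      (α * y + β) * (y - x) ≥ ((α - β) / 2) * (y - x)^2 := by
  rintro x ⟨hx1, hx2⟩ y ⟨hy1, hy2⟩ h
  have hFx : α * x + β < 0 := by nlinarith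
  have hyx : y ≤ x := by nlinarith
  nlinarith [mul_nonneg (sub_nonneg.2 hyx) (sub_nonneg.2 hx2), mul_nonneg (sub_nonneg.2 hyx) (sub_nonneg.2 (neg_le_iff_add_nonneg.1 hy1 : (0:ℝ) ≤ y + 1))]
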